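/- Let w ∈ S_n be a non-vexillary permutation. Then there exist (p,q), (p̃,q̃) ∈ ess(w) with p̃ < p and q̃ < q, and an element (p̄,q̄) of D(w) inside the rectangle [p̃+1,p]×[q̃+1,q] such that, setting r̄ = rank(w^T_{p̄q̄}) + 1 and r̃ = rank(w^T_{p̃q̃}) + 1, one has r̄ − r̃ ≥ q̄ − q̃ and r̄ − r̃ ≥ p̄ − p̃; consequently the minor with rows [p̄−r̄+1, p̄] and columns [q̄−r̄+1, q̄] contains the minor with rows [p̃−r̃+1, p̃] and columns [q̃−r̃+1, q̃]. -/
import Mathlib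

set_option maxRecDepth 4000


/-- `(i,j)` lies in the Rothe diagram `D(w)`: `w i > j` and `w⁻¹ j > i`. -/
def InRothe {n : ℕ} (w : Equiv.Perm (Fin n)) (i j : Fin n) : Prop :=
  j < w i ∧ i < w.symm j

/-- `(p,q)` lies in the essential set `ess(w)`. -/
def InEss {n : ℕ} (w : Equiv.Perm (Fin n)) (p q : Fin n) : Prop :=
  InRothe w p q ∧ (∀ q' : Fin n, (q' : ℕ) = (q : ℕ) + 1 → ¬ InRothe w p q') ∧
    ∀ p' : Fin n, (p' : ℕ) = (p : ℕ) + 1 → ¬ InRothe w p' q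

/-- `w` is vexillary, i.e. 2143-avoiding. -/
def Vexillary {n : ℕ} (w : Equiv.Perm (Fin n)) : Prop :=
  ¬ ∃ i j k l : Fin n, i < j ∧ j < k ∧ k < l ∧ w j < w i ∧ w i < w l ∧ w l < w k

/-- `rank(w^T_{pq})` (0-based): the number of `i ≤ p` with `w i ≤ q`. -/
def rkNW {n : ℕ} (w : Equiv.Perm (Fin n)) (p q : Fin n) : ℕ :=
  (Finset.univ.filter fun i => i ≤ p ∧ w i ≤ q).card

/-- if `w` is not vexillary, there are `(p,q), (p̃,q̃) ∈ ess(w)` with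
`p̃ < p`, `q̃ < q` and a northwest-most element `(p̄,q̄)` of `D(w)` in the rectangle
`[p̃+1,p] × [q̃+1,q]` such that, with `r̄ = rank(w^T_{p̄q̄}) + 1` and
`r̃ = rank(w^T_{p̃q̃}) + 1`, one has `r̄ − r̃ ≥ q̄ − q̃` and `r̄ − r̃ ≥ p̄ − p̃`;
consequently the row interval `[p̃−r̃+1, p̃]` is contained in `[p̄−r̄+1, p̄]` and the
column interval `[q̃−r̃+1, q̃]` in `[q̄−r̄+1, q̄]` (0-based, expressed over `ℤ`), i.e.
the corresponding elusive minor at `(p̃,q̃)` is contained in the one at `(p̄,q̄)`. -/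

lemma lemW {n : ℕ} (w : Equiv.Perm (Fin n)) :
    ∀ N : ℕ, ∀ a e : Fin n, (e : ℕ) + (w a : ℕ) ≤ N → a < e → w e < w a →
    ∃ x y : Fin n, InEss w x y ∧ x < e ∧ y < w a := by
  intro N
  induction N with
  | zero =>
    intro a e hN hae _
    have h1 : (a : ℕ) < e := hae
    omega
  | succ N ih =>
    intro a e hN hae hwea
    have hae' : (a : ℕ) < e := hae
    have hwea' : (w e : ℕ) < (w a : ℕ) := hwea
    have hen : (e : ℕ) < n := e.isLt
    have hwan : (w a : ℕ) < n := (w a).isLt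
    set e1 : Fin n := ⟨(e : ℕ) - 1, by omega⟩ with he1def
    set v1 : Fin n := ⟨(w a : ℕ) - 1, by omega⟩ with hv1def
    have he1v : (e1 : ℕ) = (e : ℕ) - 1 := rfl
    have hv1v : (v1 : ℕ) = (w a : ℕ) - 1 := rfl
    by_cases hA : w e1 < w a
    · have hne : a ≠ e1 := by
        intro h
        rw [← h] at hA
        exact lt_irrefl _ hA
      have hane : (a : ℕ) ≠ (e1 : ℕ) := fun h => hne (Fin.ext h)
      have hae1 : a < e1 := by
        show (a : ℕ) < (e1 : ℕ)
        omega
      obtain ⟨x, y, hxy, hx, hy⟩ := ih a e1 (by omega) hae1 hA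
      refine ⟨x, y, hxy, lt_trans hx ?_, hy⟩
      show (e1 : ℕ) < (e : ℕ)
      omega
    · by_cases hB : w.symm v1 < e
      · have ha2 : w (w.symm v1) = v1 := w.apply_symm_apply v1
        have hnv : w e ≠ v1 := by
          intro h
          have he2 : e = w.symm v1 := by rw [← h, Equiv.symm_apply_apply]
          rw [← he2] at hB
          exact lt_irrefl _ hB
        have hnv' : (w e : ℕ) ≠ (v1 : ℕ) := fun h => hnv (Fin.ext h)
        have hlt : w e < w (w.symm v1) := by
          rw [ha2]
          show (w e : ℕ) < (v1 : ℕ)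
          omega
        obtain ⟨x, y, hxy, hx, hy⟩ := ih (w.symm v1) e (by rw [ha2]; omega) hB hlt
        refine ⟨x, y, hxy, hx, ?_⟩
        rw [ha2] at hy
        have : (y : ℕ) < (v1 : ℕ) := hy
        show (y : ℕ) < (w a : ℕ)
        omega
      · push_neg at hA hB
        have hA' : (w a : ℕ) ≤ (w e1 : ℕ) := hA
        have hB' : (e : ℕ) ≤ (w.symm v1 : ℕ) := hB
        refine ⟨e1, v1, ⟨⟨?_, ?_⟩, ?_, ?_⟩, ?_, ?_⟩
        · show (v1 : ℕ) < (w e1 : ℕ); omega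
        · show (e1 : ℕ) < (w.symm v1 : ℕ); omega
        · intro q' hq' hr
          have hq'v : q' = w a := Fin.ext (by omega)
          obtain ⟨_, h2⟩ := hr
          rw [hq'v, Equiv.symm_apply_apply] at h2
          have h2' : (e1 : ℕ) < (a : ℕ) := h2
          omega
        · intro p' hp' hr
          have hp'v : p' = e := Fin.ext (by omega)
          obtain ⟨h1, _⟩ := hr
          rw [hp'v] at h1
          have h1' : (v1 : ℕ) < (w e : ℕ) := h1
          omega
        · show (e1 : ℕ) < (e : ℕ); omega
        · show (v1 : ℕ) < (w a : ℕ); omega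

lemma quadEss {n : ℕ} (w : Equiv.Perm (Fin n)) :
    ∀ M1 M2 : ℕ, ∀ a b c d : Fin n, n - (d : ℕ) ≤ M1 → n - (c : ℕ) ≤ M2 →
    InRothe w a b → InRothe w c d → a < c → b < d →
    ¬ InRothe w a d → ¬ InRothe w c b →
    ∃ a' b' c' d' : Fin n, InRothe w a' b' ∧ InEss w c' d' ∧ a' < c' ∧ b' < d' ∧
      ¬ InRothe w a' d' ∧ ¬ InRothe w c' b' := by
  intro M1
  induction M1 with
  | zero =>
    intro M2 a b c d hd _ _ _ _ _ _ _
    have := d.isLt; omega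
  | succ M1 ih1 =>
    intro M2
    induction M2 with
    | zero =>
      intro a b c d _ hc _ _ _ _ _ _
      have := c.isLt; omega
    | succ M2 ih2 =>
      intro a b c d hd hc hab hcd hac hbd had hcb
      by_cases hE : ∃ d' : Fin n, (d' : ℕ) = (d : ℕ) + 1 ∧ InRothe w c d'
      · obtain ⟨d', hd'v, hcd'⟩ := hE
        have hbd' : b < d' := by
          have h1 : (b : ℕ) < (d : ℕ) := hbd
          show (b : ℕ) < (d' : ℕ); omega
        by_cases hAD : InRothe w a d'
        · -- use m := w.symm d
          obtain ⟨hd'a, had'⟩ := hAD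
          have hdwa : d < w a := by
            have h1 : (d' : ℕ) < (w a : ℕ) := hd'a
            show (d : ℕ) < (w a : ℕ); omega
          have hsda : w.symm d ≤ a := by
            by_contra hcon
            push_neg at hcon
            exact had ⟨hdwa, hcon⟩
          have hma : w.symm d ≠ a := by
            intro h
            have : w a = d := by rw [← h, Equiv.apply_symm_apply]
            rw [this] at hdwa
            exact lt_irrefl _ hdwa
          have hmalt : (w.symm d : ℕ) < (a : ℕ) :=
            lt_of_le_of_ne hsda (fun h => hma (Fin.ext h))
          have hwmd : w (w.symm d) = d := w.apply_symm_apply d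
          refine ih1 n (w.symm d) b c d' (by omega) (by have := c.isLt; omega)
            ⟨?_, ?_⟩ hcd' ?_ hbd' ?_ hcb
          · show (b : ℕ) < (w (w.symm d) : ℕ)
            rw [hwmd]
            exact hbd
          · calc w.symm d < a := hmalt
              _ < w.symm b := hab.2
          · show (w.symm d : ℕ) < (c : ℕ)
            have : (a : ℕ) < c := hac
            omega
          · intro ⟨h1, _⟩
            rw [hwmd] at h1
            have h1' : (d' : ℕ) < (d : ℕ) := h1
            omega
        · exact ih1 n a b c d' (by omega) (by have := c.isLt; omega)
            hab hcd' hac hbd' hAD hcb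
      · by_cases hS : ∃ p' : Fin n, (p' : ℕ) = (c : ℕ) + 1 ∧ InRothe w p' d
        · obtain ⟨p', hp'v, hp'd⟩ := hS
          have hacp : a < p' := by
            have h1 : (a : ℕ) < (c : ℕ) := hac
            show (a : ℕ) < (p' : ℕ); omega
          refine ih2 a b p' d hd (by omega) hab hp'd hacp hbd had ?_
          intro ⟨h1, h2⟩
          refine hcb ⟨?_, ?_⟩
          · show (b : ℕ) < (w c : ℕ)
            have h3 : (d : ℕ) < (w c : ℕ) := hcd.1
            have h4 : (b : ℕ) < (d : ℕ) := hbd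
            omega
          · calc c < p' := by show (c : ℕ) < (p' : ℕ); omega
              _ < w.symm b := h2
        · exact ⟨a, b, c, d, hab,
            ⟨hcd, fun q' hq' hr => hE ⟨q', hq', hr⟩, fun p' hp' hr => hS ⟨p', hp', hr⟩⟩,
            hac, hbd, had, hcb⟩

lemma rank_ineq {n : ℕ} (w : Equiv.Perm (Fin n)) (pt qt pb qb : Fin n)
    (ht : InEss w pt qt) (hb : InRothe w pb qb) (hp : pt < pb) (hq : qt < qb)
    (hNW : ∀ i j : Fin n, pt < i → i ≤ pb → qt < j → j ≤ qb → (i, j) ≠ (pb, qb) →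
      ¬ InRothe w i j) :
    rkNW w pt qt + ((qb : ℕ) - qt) ≤ rkNW w pb qb ∧
      rkNW w pt qt + ((pb : ℕ) - pt) ≤ rkNW w pb qb := by
  obtain ⟨⟨hqtw, hptw⟩, hEq, hEp⟩ := ht
  obtain ⟨hqbw, hpbw⟩ := hb
  have hpv : (pt : ℕ) < pb := hp
  have hqv : (qt : ℕ) < qb := hq
  have hpbn : (pb : ℕ) < n := pb.isLt
  have hqbn : (qb : ℕ) < n := qb.isLt
  have hqbwv : (qb : ℕ) < (w pb : ℕ) := hqbw
  have hpbwv : (pb : ℕ) < (w.symm qb : ℕ) := hpbw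
  have hqtwv : (qt : ℕ) < (w pt : ℕ) := hqtw
  have hptwv : (pt : ℕ) < (w.symm qt : ℕ) := hptw
  have hStmem : ∀ i : Fin n,
      i ∈ (Finset.univ.filter fun i : Fin n => i ≤ pt ∧ w i ≤ qt) ↔
        ((i : ℕ) ≤ pt ∧ (w i : ℕ) ≤ qt) := by
    intro i
    rw [Finset.mem_filter]
    exact ⟨fun h => h.2, fun h => ⟨Finset.mem_univ _, h⟩⟩
  have hSbmem : ∀ i : Fin n,
      i ∈ (Finset.univ.filter fun i : Fin n => i ≤ pb ∧ w i ≤ qb) ↔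
        ((i : ℕ) ≤ pb ∧ (w i : ℕ) ≤ qb) := by
    intro i
    rw [Finset.mem_filter]
    exact ⟨fun h => h.2, fun h => ⟨Finset.mem_univ _, h⟩⟩
  constructor
  · -- column version
    have hE1mem : ∀ x : Fin n, x ∈ (Finset.Ioo qt qb).image w.symm →
        (qt : ℕ) < w x ∧ (w x : ℕ) < qb ∧ (x : ℕ) ≤ pb := by
      intro x hx
      rw [Finset.mem_image] at hx
      obtain ⟨j, hj, hjx⟩ := hx
      rw [Finset.mem_Ioo] at hj
      have hj1 : (qt : ℕ) < j := hj.1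
      have hj2 : (j : ℕ) < qb := hj.2
      have hwx : w x = j := by rw [← hjx, Equiv.apply_symm_apply]
      refine ⟨by rw [hwx]; exact hj1, by rw [hwx]; exact hj2, ?_⟩
      by_contra hcon
      push_neg at hcon
      have hcon' : (pb : ℕ) < x := hcon
      refine hNW pb j hp (le_refl _) hj.1 (le_of_lt hj.2) ?_ ?_
      · intro hpair
        have : j = qb := congrArg Prod.snd hpair
        rw [this] at hj2; omega
      · refine ⟨?_, ?_⟩
        · show (j : ℕ) < (w pb : ℕ); omega
        · show (pb : ℕ) < (w.symm j : ℕ)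
          rw [← hjx] at hcon'; exact hcon'
    obtain ⟨i0, hi0v⟩ : ∃ i0 : Fin n, (i0 : ℕ) = (pt : ℕ) + 1 :=
      ⟨⟨(pt : ℕ) + 1, by omega⟩, rfl⟩
    have hi0w : (w i0 : ℕ) ≤ qt := by
      have h := hEp i0 hi0v
      by_contra hcon
      push_neg at hcon
      have hle : (w.symm qt : ℕ) ≤ (i0 : ℕ) := by
        by_contra hc2
        push_neg at hc2
        exact h ⟨hcon, hc2⟩
      have he : w.symm qt = i0 := Fin.ext (by omega)
      have : w i0 = qt := by rw [← he, Equiv.apply_symm_apply]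
      rw [this] at hcon; omega
    have hsub : (Finset.univ.filter fun i : Fin n => i ≤ pt ∧ w i ≤ qt) ∪
        ((Finset.Ioo qt qb).image w.symm ∪ {i0}) ⊆
        (Finset.univ.filter fun i : Fin n => i ≤ pb ∧ w i ≤ qb) := by
      intro x hx
      rw [Finset.mem_union, Finset.mem_union, Finset.mem_singleton] at hx
      rw [hSbmem]
      rcases hx with hx | hx | hx
      · rw [hStmem] at hx; omega
      · have := hE1mem x hx; omega
      · subst hx; omega
    have hd1 : Disjoint ((Finset.Ioo qt qb).image w.symm) ({i0} : Finset (Fin n)) := by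
      rw [Finset.disjoint_singleton_right]
      intro hx
      have := hE1mem i0 hx; omega
    have hd2 : Disjoint (Finset.univ.filter fun i : Fin n => i ≤ pt ∧ w i ≤ qt)
        ((Finset.Ioo qt qb).image w.symm ∪ {i0}) := by
      rw [Finset.disjoint_left]
      intro x hx hx2
      rw [hStmem] at hx
      rw [Finset.mem_union, Finset.mem_singleton] at hx2
      rcases hx2 with hx2 | hx2
      · have := hE1mem x hx2; omega
      · subst hx2; omega
    have hcard : rkNW w pt qt + (((Finset.Ioo qt qb).image w.symm).card + 1) ≤
        rkNW w pb qb := by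
      have h1 := Finset.card_le_card hsub
      rw [Finset.card_union_of_disjoint hd2, Finset.card_union_of_disjoint hd1,
        Finset.card_singleton] at h1
      exact h1
    have hE1card : ((Finset.Ioo qt qb).image w.symm).card = (qb : ℕ) - qt - 1 := by
      rw [Finset.card_image_of_injective _ (Equiv.injective _), Fin.card_Ioo]
    rw [hE1card] at hcard
    omega
  · -- row version
    have hE2mem : ∀ x : Fin n, x ∈ Finset.Ioo pt pb →
        (pt : ℕ) < x ∧ (x : ℕ) < pb ∧ (w x : ℕ) ≤ qb := by
      intro x hx
      rw [Finset.mem_Ioo] at hx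
      have hx1 : (pt : ℕ) < x := hx.1
      have hx2 : (x : ℕ) < pb := hx.2
      refine ⟨hx1, hx2, ?_⟩
      by_contra hcon
      push_neg at hcon
      have hcon' : (qb : ℕ) < (w x : ℕ) := hcon
      refine hNW x qb hx.1 (le_of_lt hx.2) hq (le_refl _) ?_ ?_
      · intro hpair
        have : x = pb := congrArg Prod.fst hpair
        rw [this] at hx2; omega
      · exact ⟨hcon, by show (x : ℕ) < (w.symm qb : ℕ); omega⟩
    obtain ⟨j0, hj0v⟩ : ∃ j0 : Fin n, (j0 : ℕ) = (qt : ℕ) + 1 :=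
      ⟨⟨(qt : ℕ) + 1, by omega⟩, rfl⟩
    have hi1w : w (w.symm j0) = j0 := w.apply_symm_apply j0
    have hi1wv : (w (w.symm j0) : ℕ) = (qt : ℕ) + 1 := by rw [hi1w, hj0v]
    have hi1le : (w.symm j0 : ℕ) ≤ pt := by
      have h := hEq j0 hj0v
      by_contra hcon
      push_neg at hcon
      have hne : j0 ≠ w pt := by
        intro h2
        have he : w.symm j0 = pt := by rw [h2, Equiv.symm_apply_apply]
        rw [he] at hcon; omega
      have hj0lt : (j0 : ℕ) < (w pt : ℕ) := by
        have : (j0 : ℕ) ≠ (w pt : ℕ) := fun h2 => hne (Fin.ext h2)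
        omega
      exact h ⟨hj0lt, hcon⟩
    have hsub : (Finset.univ.filter fun i : Fin n => i ≤ pt ∧ w i ≤ qt) ∪
        (Finset.Ioo pt pb ∪ {w.symm j0}) ⊆
        (Finset.univ.filter fun i : Fin n => i ≤ pb ∧ w i ≤ qb) := by
      intro x hx
      rw [Finset.mem_union, Finset.mem_union, Finset.mem_singleton] at hx
      rw [hSbmem]
      rcases hx with hx | hx | hx
      · rw [hStmem] at hx; omega
      · have := hE2mem x hx; omega
      · subst hx; omega
    have hd1 : Disjoint (Finset.Ioo pt pb) ({w.symm j0} : Finset (Fin n)) := by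
      rw [Finset.disjoint_singleton_right]
      intro hx
      have := hE2mem _ hx; omega
    have hd2 : Disjoint (Finset.univ.filter fun i : Fin n => i ≤ pt ∧ w i ≤ qt)
        (Finset.Ioo pt pb ∪ {w.symm j0}) := by
      rw [Finset.disjoint_left]
      intro x hx hx2
      rw [hStmem] at hx
      rw [Finset.mem_union, Finset.mem_singleton] at hx2
      rcases hx2 with hx2 | hx2
      · have := hE2mem x hx2; omega
      · subst hx2; omega
    have hcard : rkNW w pt qt + ((Finset.Ioo pt pb).card + 1) ≤ rkNW w pb qb := by
      have h1 := Finset.card_le_card hsub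
      rw [Finset.card_union_of_disjoint hd2, Finset.card_union_of_disjoint hd1,
        Finset.card_singleton] at h1
      exact h1
    have hE2card : (Finset.Ioo pt pb).card = (pb : ℕ) - pt - 1 := by rw [Fin.card_Ioo]
    rw [hE2card] at hcard
    omega

theorem stmt_16 (n : ℕ) (w : Equiv.Perm (Fin n)) (hw : ¬ Vexillary w) :
    ∃ p q pt qt : Fin n, InEss w p q ∧ InEss w pt qt ∧ pt < p ∧ qt < q ∧
      ∃ pb qb : Fin n, InRothe w pb qb ∧ pt < pb ∧ pb ≤ p ∧ qt < qb ∧ qb ≤ q ∧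
        (∀ i j : Fin n, pt < i → i ≤ pb → qt < j → j ≤ qb → (i, j) ≠ (pb, qb) →
          ¬ InRothe w i j) ∧
        ((rkNW w pb qb : ℤ) + 1) - ((rkNW w pt qt : ℤ) + 1) ≥ (qb : ℤ) - (qt : ℤ) ∧
        ((rkNW w pb qb : ℤ) + 1) - ((rkNW w pt qt : ℤ) + 1) ≥ (pb : ℤ) - (pt : ℤ) ∧
        Set.Icc ((pt : ℤ) - rkNW w pt qt) (pt : ℤ) ⊆
          Set.Icc ((pb : ℤ) - rkNW w pb qb) (pb : ℤ) ∧
        Set.Icc ((qt : ℤ) - rkNW w pt qt) (qt : ℤ) ⊆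
          Set.Icc ((qb : ℤ) - rkNW w pb qb) (qb : ℤ) := by
  classical
  simp only [Vexillary, not_not] at hw
  obtain ⟨i, j, k, l, hij, hjk, hkl, h1, h2, h3⟩ := hw
  have hab : InRothe w i (w j) := ⟨h1, by rw [Equiv.symm_apply_apply]; exact hij⟩
  have hcd : InRothe w k (w l) := ⟨h3, by rw [Equiv.symm_apply_apply]; exact hkl⟩
  have hik : i < k := lt_trans hij hjk
  have hbd0 : w j < w l := lt_trans h1 h2
  have had : ¬ InRothe w i (w l) := fun hr => absurd hr.1 (not_lt.mpr (le_of_lt h2))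
  have hcb : ¬ InRothe w k (w j) := fun hr => by
    have h4 := hr.2
    rw [Equiv.symm_apply_apply] at h4
    exact absurd h4 (not_lt.mpr (le_of_lt hjk))
  obtain ⟨a, b, c, d, hab', hEssCD, hac, hbd', had', hcb'⟩ :=
    quadEss w n n i (w j) k (w l) (by omega) (by omega) hab hcd hik hbd0 had hcb
  have hcdR : InRothe w c d := hEssCD.1
  have ha_e : a < w.symm b := hab'.2
  have hwea : w (w.symm b) < w a := by
    rw [Equiv.apply_symm_apply]; exact hab'.1
  obtain ⟨pt, qt, hEssT, hx, hy⟩ :=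
    lemW w ((w.symm b : ℕ) + (w a : ℕ)) a (w.symm b) (le_refl _) ha_e hwea
  have hdc : (d : ℕ) < (w c : ℕ) := hcdR.1
  have hcd2 : (c : ℕ) < (w.symm d : ℕ) := hcdR.2
  have hbdv : (b : ℕ) < (d : ℕ) := hbd'
  have hacv : (a : ℕ) < (c : ℕ) := hac
  have hec : (w.symm b : ℕ) ≤ c := by
    by_contra hcon
    push_neg at hcon
    exact hcb' ⟨by show (b : ℕ) < (w c : ℕ); omega, hcon⟩
  have hwad : (w a : ℕ) ≤ d := by
    by_contra hcon
    push_neg at hcon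
    exact had' ⟨hcon, by show (a : ℕ) < (w.symm d : ℕ); omega⟩
  have hptc : pt < c := by
    have hxx : (pt : ℕ) < (w.symm b : ℕ) := hx
    show (pt : ℕ) < (c : ℕ); omega
  have hqtd : qt < d := by
    have hyy : (qt : ℕ) < (w a : ℕ) := hy
    show (qt : ℕ) < (d : ℕ); omega
  -- NW-most diagram box in the rectangle
  set S := Finset.univ.filter
    (fun x : Fin n × Fin n => InRothe w x.1 x.2 ∧ pt < x.1 ∧ x.1 ≤ c ∧ qt < x.2 ∧ x.2 ≤ d)
    with hSdef
  have hScd : (c, d) ∈ S := by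
    rw [hSdef, Finset.mem_filter]
    exact ⟨Finset.mem_univ _, hcdR, hptc, le_refl _, hqtd, le_refl _⟩
  obtain ⟨⟨pb, qb⟩, hmem, hmin⟩ :=
    Finset.exists_min_image S (fun x => (x.1 : ℕ) + (x.2 : ℕ)) ⟨(c, d), hScd⟩
  rw [hSdef, Finset.mem_filter] at hmem
  obtain ⟨-, hRb, hptpb, hpbc, hqtqb, hqbd⟩ := hmem
  have hNW : ∀ i' j' : Fin n, pt < i' → i' ≤ pb → qt < j' → j' ≤ qb →
      (i', j') ≠ (pb, qb) → ¬ InRothe w i' j' := by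
    intro i' j' h1' h2' h3' h4' h5' hr
    have hmemij : (i', j') ∈ S := by
      rw [hSdef, Finset.mem_filter]
      exact ⟨Finset.mem_univ _, hr, h1', le_trans h2' hpbc, h3', le_trans h4' hqbd⟩
    have hmin' := hmin (i', j') hmemij
    have hi' : (i' : ℕ) ≤ pb := h2'
    have hj' : (j' : ℕ) ≤ qb := h4'
    have hsum : (pb : ℕ) + (qb : ℕ) ≤ (i' : ℕ) + (j' : ℕ) := hmin'
    have hieq : i' = pb := Fin.ext (by omega)
    have hjeq : j' = qb := Fin.ext (by omega)
    exact h5' (by rw [hieq, hjeq])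
  obtain ⟨hrk1, hrk2⟩ := rank_ineq w pt qt pb qb hEssT hRb hptpb hqtqb hNW
  have hqlt : (qt : ℕ) < (qb : ℕ) := hqtqb
  have hplt : (pt : ℕ) < (pb : ℕ) := hptpb
  refine ⟨c, d, pt, qt, hEssCD, hEssT, hptc, hqtd, pb, qb, hRb, hptpb, hpbc, hqtqb, hqbd,
    hNW, ?_, ?_, ?_, ?_⟩
  · omega
  · omega
  · exact Set.Icc_subset_Icc (by omega) (by exact_mod_cast le_of_lt hplt)
  · exact Set.Icc_subset_Icc (by omega) (by exact_mod_cast le_of_lt hqlt)
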